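/- Let C(q) = Σ_{n≥0} Cat(n)·q^n be the generating function of the Catalan numbers. Then for every m ≥ 0 and every n ≥ 0, the coefficient of q^{n+m} in C(q)·(C(q) − 1)^m equals ((2m+1)/(2n + 2m + 1))·binom(2n + 2m + 1, n). -/

import Mathlib

/-- The generating function `C(q) = Σ_{n≥0} Cat(n) q^n` of the Catalan numbers. -/
noncomputable def catalanGF : PowerSeries ℚ :=
  PowerSeries.mk fun n => (catalan n : ℚ)

open PowerSeries

lemma catalanGF_eq : catalanGF = 1 + X * catalanGF ^ 2 := by
  ext n
  cases n with
  | zero => simp [catalanGF]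
  | succ n =>
    rw [map_add, PowerSeries.coeff_succ_X_mul, pow_two, PowerSeries.coeff_mul]
    simp only [catalanGF, coeff_mk, PowerSeries.coeff_one, Nat.succ_ne_zero, if_false, zero_add]
    rw [Finset.Nat.sum_antidiagonal_eq_sum_range_succ_mk, catalan_succ]
    push_cast
    exact Fin.sum_univ_eq_sum_range (fun i => (catalan i : ℚ) * catalan (n - i)) (n+1)

lemma coeff_catalanGF_pow (n : ℕ) : ∀ k : ℕ, 1 ≤ k →
    (PowerSeries.coeff n) (catalanGF ^ k)
      = (k : ℚ) / ((2*n+k : ℕ) : ℚ) * (((2*n+k).choose n : ℕ) : ℚ) := by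
  induction n using Nat.strong_induction_on with
  | _ n IHn =>
    intro k hk
    induction k, hk using Nat.le_induction with
    | base =>
      simp only [pow_one, catalanGF, coeff_mk]
      have h1 : (n+1) * catalan n = (2*n).choose n := by
        rw [succ_mul_catalan_eq_centralBinom, Nat.centralBinom]
      have h2 : (2*n+1) * (2*n).choose n = (2*n+1).choose (n+1) * (n+1) :=
        Nat.add_one_mul_choose_eq (2*n) n
      have h3 : (2*n+1).choose (n+1) = (2*n+1).choose n := by
        rw [← Nat.choose_symm (by omega : n+1 ≤ 2*n+1)]
        congr 1; omega
      rw [h3] at h2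
      have hne : ((2*n+1 : ℕ) : ℚ) ≠ 0 := by positivity
      field_simp
      have h1' : ((n:ℚ)+1) * catalan n = (2*n).choose n := by exact_mod_cast h1
      have h2' : ((2*n+1 : ℕ):ℚ) * (2*n).choose n = (2*n+1).choose n * ((n:ℚ)+1) := by
        exact_mod_cast h2
      push_cast at h1' h2' ⊢
      nlinarith [h1', h2']
    | succ k hk IHk =>
      have hC : catalanGF ^ (k+1) = catalanGF ^ k + X * catalanGF ^ (k+2) := by
        rw [pow_succ]
        nth_rewrite 2 [catalanGF_eq]
        ring
      rw [hC, map_add, IHk]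
      cases n with
      | zero =>
        have hk0 : (k:ℚ) ≠ 0 := Nat.cast_ne_zero.mpr (by omega)
        simp [div_self hk0, div_self (show ((k:ℚ)+1) ≠ 0 by positivity)]
      | succ nn =>
        rw [PowerSeries.coeff_succ_X_mul, IHn nn (by omega) (k+2) (by omega)]
        have e1 : (2*(nn+1)+(k+1)).choose (nn+1)
            = (2*nn+(k+2)).choose nn + (2*nn+(k+2)).choose (nn+1) := by
          have : 2*(nn+1)+(k+1) = (2*nn+(k+2)) + 1 := by ring
          rw [this, Nat.choose_succ_succ' ]
        have e2 : (2*nn+(k+2)).choose (nn+1) * (nn+1)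
            = (2*nn+(k+2)).choose nn * (nn+k+2) := by
          have h := Nat.choose_succ_right_eq (2*nn+(k+2)) nn
          rw [show 2*nn+(k+2) - nn = nn+k+2 from by omega] at h
          exact h
        have e3 : (2*(nn+1)+k) = 2*nn+(k+2) := by ring
        rw [e3]
        have he1 : ((2*(nn+1)+(k+1)).choose (nn+1) : ℚ)
            = (2*nn+(k+2)).choose nn + (2*nn+(k+2)).choose (nn+1) := by
          exact_mod_cast congrArg (Nat.cast : ℕ → ℚ) e1
        have he2 : ((2*nn+(k+2)).choose (nn+1) : ℚ) * ((nn:ℚ)+1)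
            = (2*nn+(k+2)).choose nn * ((nn:ℚ)+k+2) := by exact_mod_cast e2
        have hd1 : ((2*nn+(k+2) : ℕ) : ℚ) ≠ 0 := by positivity
        have hd2 : ((2*(nn+1)+(k+1) : ℕ) : ℚ) ≠ 0 := by positivity
        push_cast at he1 he2 hd1 hd2 ⊢
        field_simp
        linear_combination (-((k:ℚ)+1) * (2*(nn:ℚ)+k+2)) * he1 - 2 * he2

theorem stmt18 (m n : ℕ) :
    PowerSeries.coeff (n + m) (catalanGF * (catalanGF - 1) ^ m) =
      ((2 * m + 1 : ℚ) / (2 * n + 2 * m + 1)) * ((2 * n + 2 * m + 1).choose n : ℚ) := by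
  have hsub : catalanGF - 1 = X * catalanGF ^ 2 := by
    nth_rewrite 1 [catalanGF_eq]; ring
  have h : catalanGF * (catalanGF - 1) ^ m = X ^ m * catalanGF ^ (2*m+1) := by
    rw [hsub, mul_pow, ← pow_mul]; ring
  rw [h, PowerSeries.coeff_X_pow_mul, coeff_catalanGF_pow n (2*m+1) (by omega),
    show 2*n+(2*m+1) = 2*n+2*m+1 from by ring]
  push_cast
  ring
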